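/- There exists an absolute constant C > 0 such that for all R ≥ 3, ∑_{1 ≤ r ≤ R} 2^(-ω(r)) / r ≤ C (log R)^(1/2). -/

import Mathlib

open scoped ArithmeticFunction ArithmeticFunction.omega
open Finset

private lemma omega_eq_card (n : ℕ) : ω n = n.primeFactors.card := by
  rw [ArithmeticFunction.cardDistinctFactors_apply, Nat.primeFactors, List.card_toFinset]

private lemma omega_le_of_dvd {a r : ℕ} (h : a ∣ r) (hr : r ≠ 0) : ω a ≤ ω r := by
  rw [omega_eq_card, omega_eq_card]
  exact Finset.card_le_card (Nat.primeFactors_mono h hr)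

private lemma omega_coprime_mul {a b : ℕ} (h : Nat.Coprime a b) :
    ω (a * b) = ω a + ω b := by
  rw [omega_eq_card, omega_eq_card, omega_eq_card, Nat.Coprime.primeFactors_mul h,
    Finset.card_union_of_disjoint h.disjoint_primeFactors]

private lemma sum_inv_sq_le' : ∀ M : ℕ, 1 ≤ M →
    ∑ g ∈ Icc 1 M, ((g : ℝ) ^ 2)⁻¹ ≤ 2 - (M : ℝ)⁻¹ := by
  intro M hM
  induction M, hM using Nat.le_induction with
  | base => norm_num
  | succ n hn ih =>
    rw [Finset.sum_Icc_succ_top (by omega)]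
    have hn0 : (0:ℝ) < n := by exact_mod_cast hn
    have key : (((n:ℝ)+1) ^ 2)⁻¹ ≤ (n:ℝ)⁻¹ - ((n:ℝ)+1)⁻¹ := by
      have heq : (n:ℝ)⁻¹ - ((n:ℝ)+1)⁻¹ = ((n:ℝ) * ((n:ℝ)+1))⁻¹ := by
        field_simp
        ring
      rw [heq]
      apply inv_anti₀ (by positivity)
      nlinarith
    push_cast
    linarith

private lemma sum_inv_sq_le (M : ℕ) : ∑ g ∈ Icc 1 M, ((g : ℝ) ^ 2)⁻¹ ≤ 2 := by
  rcases Nat.eq_zero_or_pos M with h | h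
  · simp [h]
  · have h1 := sum_inv_sq_le' M h
    have h2 : (0:ℝ) < (M : ℝ)⁻¹ := inv_pos.mpr (by exact_mod_cast h)
    linarith

private lemma count_coprime_pairs (n : ℕ) :
    ((n.divisorsAntidiagonal).filter (fun p => Nat.Coprime p.1 p.2)).card ≤ 2 ^ (ω n) := by
  rw [omega_eq_card]
  calc _ ≤ (n.primeFactors.powerset).card := ?_
    _ = 2 ^ n.primeFactors.card := Finset.card_powerset _
  apply Finset.card_le_card_of_injOn (fun p => (p.1 : ℕ).primeFactors)
  · intro p hp
    simp only [mem_coe, mem_filter, Nat.mem_divisorsAntidiagonal] at hp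
    rw [Finset.mem_coe, Finset.mem_powerset]
    exact Nat.primeFactors_mono ⟨p.2, hp.1.1.symm⟩ hp.1.2
  · intro p hp q hq hpq
    simp only [coe_filter, Set.mem_setOf_eq, Nat.mem_divisorsAntidiagonal] at hp hq
    obtain ⟨⟨hpn, hn0⟩, hpc⟩ := hp
    obtain ⟨⟨hqn, _⟩, hqc⟩ := hq
    have hp1 : p.1 ≠ 0 := by rintro h; rw [h, zero_mul] at hpn; exact hn0 hpn.symm
    have hp2 : p.2 ≠ 0 := by rintro h; rw [h, mul_zero] at hpn; exact hn0 hpn.symm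
    have hq1 : q.1 ≠ 0 := by rintro h; rw [h, zero_mul] at hqn; exact hn0 hqn.symm
    have hq2 : q.2 ≠ 0 := by rintro h; rw [h, mul_zero] at hqn; exact hn0 hqn.symm
    have key : ∀ a b a' b' : ℕ, a ≠ 0 → b ≠ 0 → a' ≠ 0 → b' ≠ 0 →
        a * b = a' * b' → Nat.Coprime a b → Nat.Coprime a' b' →
        a.primeFactors = a'.primeFactors → a = a' := by
      intro a b a' b' ha hb ha' hb' hab hc hc' hpf
      have hzero : ∀ x : ℕ, ∀ q : ℕ, q ∉ x.primeFactors → x.factorization q = 0 := by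
        intro x q hq
        exact Finsupp.notMem_support_iff.mp (by rwa [Nat.support_factorization])
      refine Nat.factorization_inj ha ha' ?_
      ext q
      have hsum : a.factorization q + b.factorization q
          = a'.factorization q + b'.factorization q := by
        rw [← Finsupp.add_apply, ← Nat.factorization_mul ha hb, hab,
          Nat.factorization_mul ha' hb', Finsupp.add_apply]
      by_cases hmem : q ∈ a.primeFactors
      · have hmem' : q ∈ a'.primeFactors := hpf ▸ hmem
        have hb0 : b.factorization q = 0 :=
          hzero _ _ (Finset.disjoint_left.mp hc.disjoint_primeFactors hmem)
        have hb0' : b'.factorization q = 0 :=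
          hzero _ _ (Finset.disjoint_left.mp hc'.disjoint_primeFactors hmem')
        omega
      · have hmem' : q ∉ a'.primeFactors := hpf ▸ hmem
        rw [hzero _ _ hmem, hzero _ _ hmem']
    have h1 : p.1 = q.1 := key _ _ _ _ hp1 hp2 hq1 hq2 (hpn.trans hqn.symm) hpc hqc hpq
    have h2 : p.2 = q.2 := by
      have := hpn.trans hqn.symm
      rw [h1] at this
      exact Nat.eq_of_mul_eq_mul_left (Nat.pos_of_ne_zero hq1) this
    exact Prod.ext h1 h2

private lemma harmonic_sum_le (N : ℕ) :
    ∑ n ∈ Icc 1 N, ((n : ℝ))⁻¹ ≤ 1 + Real.log N := by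
  have h := harmonic_le_one_add_log N
  have he : ((harmonic N : ℚ) : ℝ) = ∑ n ∈ Icc 1 N, ((n : ℝ))⁻¹ := by
    rw [harmonic_eq_sum_Icc]
    push_cast
    rfl
  linarith [he ▸ h]

/-- ∑_{1 ≤ r ≤ R} 2^(-ω(r))/r ≤ C (log R)^(1/2) for all R ≥ 3. -/
theorem sum_two_pow_neg_omega_div_bound :
    ∃ C : ℝ, 0 < C ∧ ∀ R : ℝ, 3 ≤ R →
      ∑ r ∈ Finset.Icc 1 ⌊R⌋₊, ((2 : ℝ) ^ (ω r))⁻¹ / r ≤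
        C * (Real.log R) ^ ((1 : ℝ) / 2) := by
  refine ⟨Real.sqrt 6, by positivity, ?_⟩
  intro R hR
  set M := ⌊R⌋₊ with hMdef
  have hM3 : 3 ≤ M := Nat.le_floor (by exact_mod_cast hR)
  have hM1 : 1 ≤ M := by omega
  have hR0 : (0:ℝ) < R := by linarith
  have hMR : (M : ℝ) ≤ R := Nat.floor_le hR0.le
  have hM0R : (0:ℝ) < M := by exact_mod_cast hM1
  have hlogR : 1 ≤ Real.log R := by
    rw [show (1:ℝ) = Real.log (Real.exp 1) by rw [Real.log_exp]]
    apply Real.log_le_log (Real.exp_pos 1)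
    linarith [Real.exp_one_lt_d9]
  set f : ℕ → ℝ := fun r => ((2 : ℝ) ^ (ω r))⁻¹ / r with hf
  have hfnn : ∀ r, 0 ≤ f r := fun r => by positivity
  set S := ∑ r ∈ Finset.Icc 1 M, f r with hS
  have hSnn : 0 ≤ S := Finset.sum_nonneg fun _ _ => hfnn _
  set v : ℕ × ℕ → ℝ := fun q => if Nat.Coprime q.1 q.2 then f (q.1 * q.2) else 0 with hv
  set h : ℕ × (ℕ × ℕ) → ℝ := fun x => ((x.1 : ℝ) ^ 2)⁻¹ * v x.2 with hh
  have hvnn : ∀ q, 0 ≤ v q := by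
    intro q
    rw [hv]
    dsimp only
    split
    · exact hfnn _
    · exact le_refl 0
  have hhnn : ∀ x, 0 ≤ h x := fun x => mul_nonneg (by positivity) (hvnn _)
  set P : Finset (ℕ × ℕ) := Finset.Icc 1 M ×ˢ Finset.Icc 1 M with hP
  set T : Finset (ℕ × (ℕ × ℕ)) := Finset.Icc 1 M ×ˢ (Finset.Icc 1 M ×ˢ Finset.Icc 1 M) with hT
  set i : ℕ × ℕ → ℕ × (ℕ × ℕ) :=
    fun p => (p.1.gcd p.2, (p.1 / p.1.gcd p.2, p.2 / p.1.gcd p.2)) with hi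
  have stepA : S ^ 2 = ∑ p ∈ P, f p.1 * f p.2 := by
    rw [sq, hS, Finset.sum_mul_sum, hP, Finset.sum_product]
  have pairFacts : ∀ p ∈ P, 1 ≤ p.1 ∧ p.1 ≤ M ∧ 1 ≤ p.2 ∧ p.2 ≤ M := by
    intro p hp
    rw [hP, Finset.mem_product, Finset.mem_Icc, Finset.mem_Icc] at hp
    exact ⟨hp.1.1, hp.1.2, hp.2.1, hp.2.2⟩
  have stepB : ∀ p ∈ P, f p.1 * f p.2 ≤ h (i p) := by
    intro p hp
    obtain ⟨h1, h2, h3, h4⟩ := pairFacts p hp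
    have hr0 : p.1 ≠ 0 := by omega
    have hs0 : p.2 ≠ 0 := by omega
    set g := p.1.gcd p.2 with hg
    have hg0 : g ≠ 0 := Nat.gcd_ne_zero_left hr0
    set a := p.1 / g with ha
    set b := p.2 / g with hb
    have hra : g * a = p.1 := Nat.mul_div_cancel' (Nat.gcd_dvd_left _ _)
    have hsb : g * b = p.2 := Nat.mul_div_cancel' (Nat.gcd_dvd_right _ _)
    have ha0 : a ≠ 0 := by rintro hx; rw [hx, mul_zero] at hra; exact hr0 hra.symm
    have hb0 : b ≠ 0 := by rintro hx; rw [hx, mul_zero] at hsb; exact hs0 hsb.symm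
    have hcop : Nat.Coprime a b :=
      Nat.coprime_div_gcd_div_gcd (Nat.gcd_pos_of_pos_left _ (by omega))
    have homega : ω (a * b) ≤ ω p.1 + ω p.2 := by
      rw [omega_coprime_mul hcop]
      exact Nat.add_le_add (omega_le_of_dvd ⟨g, by rw [← hra]; ring⟩ hr0)
        (omega_le_of_dvd ⟨g, by rw [← hsb]; ring⟩ hs0)
    have hiv : h (i p) = ((g:ℝ)^2)⁻¹ * (((2:ℝ) ^ (ω (a*b)))⁻¹ / (↑(a*b))) := by
      rw [hh, hi, hv]
      dsimp only
      rw [if_pos hcop]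
    rw [hiv]
    have hcast : (p.1 : ℝ) * p.2 = (g:ℝ)^2 * (↑(a*b) : ℝ) := by
      push_cast [← hra, ← hsb]
      ring
    have lhs_eq : f p.1 * f p.2 = ((2:ℝ)^(ω p.1 + ω p.2))⁻¹ * ((g:ℝ)^2 * (↑(a*b) : ℝ))⁻¹ := by
      rw [hf]
      dsimp only
      rw [← hcast, pow_add, div_mul_div_comm, mul_inv, div_eq_mul_inv]
    have habpos : (0:ℝ) < (↑(a*b) : ℝ) := by
      have : a * b ≠ 0 := Nat.mul_ne_zero ha0 hb0
      positivity
    have hle : ((2:ℝ)^(ω p.1 + ω p.2))⁻¹ ≤ ((2:ℝ)^(ω (a*b)))⁻¹ := by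
      apply inv_anti₀ (by positivity)
      exact pow_le_pow_right₀ (by norm_num) homega
    calc f p.1 * f p.2
        = ((g:ℝ)^2)⁻¹ * (((2:ℝ)^(ω p.1 + ω p.2))⁻¹ * ((↑(a*b) : ℝ))⁻¹) := by
          rw [lhs_eq, mul_inv]; ring
      _ ≤ ((g:ℝ)^2)⁻¹ * (((2:ℝ)^(ω (a*b)))⁻¹ * ((↑(a*b) : ℝ))⁻¹) := by
          apply mul_le_mul_of_nonneg_left
            (mul_le_mul_of_nonneg_right hle (by positivity)) (by positivity)
      _ = ((g:ℝ)^2)⁻¹ * (((2:ℝ) ^ (ω (a*b)))⁻¹ / (↑(a*b))) := by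
          rw [div_eq_mul_inv]
  have stepC : ∑ p ∈ P, h (i p) ≤ ∑ x ∈ T, h x := by
    have hinj : Set.InjOn i P := by
      intro p hp q hq hpq
      obtain ⟨hp1, _, hp3, _⟩ := pairFacts p hp
      obtain ⟨hq1, _, hq3, _⟩ := pairFacts q hq
      simp only [hi, Prod.mk.injEq] at hpq
      obtain ⟨e1, e2, e3⟩ := hpq
      have hra : p.1.gcd p.2 * (p.1 / p.1.gcd p.2) = p.1 :=
        Nat.mul_div_cancel' (Nat.gcd_dvd_left _ _)
      have hsb : p.1.gcd p.2 * (p.2 / p.1.gcd p.2) = p.2 :=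
        Nat.mul_div_cancel' (Nat.gcd_dvd_right _ _)
      have hra' : q.1.gcd q.2 * (q.1 / q.1.gcd q.2) = q.1 :=
        Nat.mul_div_cancel' (Nat.gcd_dvd_left _ _)
      have hsb' : q.1.gcd q.2 * (q.2 / q.1.gcd q.2) = q.2 :=
        Nat.mul_div_cancel' (Nat.gcd_dvd_right _ _)
      have e4 : p.1 = q.1 := by rw [← hra, ← hra', e2, e1]
      have e5 : p.2 = q.2 := by rw [← hsb, ← hsb', e3, e1]
      exact Prod.ext e4 e5
    rw [← Finset.sum_image (fun p hp q hq => hinj hp hq)]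
    apply Finset.sum_le_sum_of_subset_of_nonneg
    · intro x hx
      rw [Finset.mem_image] at hx
      obtain ⟨p, hp, rfl⟩ := hx
      obtain ⟨h1, h2, h3, h4⟩ := pairFacts p hp
      have hgd : p.1.gcd p.2 ∣ p.1 := Nat.gcd_dvd_left _ _
      have hgd2 : p.1.gcd p.2 ∣ p.2 := Nat.gcd_dvd_right _ _
      have hg1 : 1 ≤ p.1.gcd p.2 :=
        Nat.one_le_iff_ne_zero.mpr (Nat.gcd_ne_zero_left (by omega))
      rw [hT, hi]
      simp only [Finset.mem_product, Finset.mem_Icc]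
      refine ⟨⟨hg1, le_trans (Nat.le_of_dvd (by omega) hgd) h2⟩,
        ⟨⟨?_, ?_⟩, ⟨?_, ?_⟩⟩⟩
      · exact (Nat.one_le_div_iff (by omega)).mpr (Nat.le_of_dvd (by omega) hgd)
      · exact le_trans (Nat.div_le_self _ _) h2
      · exact (Nat.one_le_div_iff (by omega)).mpr (Nat.le_of_dvd (by omega) hgd2)
      · exact le_trans (Nat.div_le_self _ _) h4
    · intro x _ _
      exact hhnn x
  have stepD : ∑ x ∈ T, h x =
      (∑ g ∈ Finset.Icc 1 M, ((g:ℝ)^2)⁻¹) * ∑ q ∈ P, v q := by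
    rw [hT, hh, Finset.sum_product, hP, Finset.sum_mul]
    apply Finset.sum_congr rfl
    intro g _
    rw [Finset.mul_sum]
  have stepE : ∑ q ∈ P, v q ≤ 1 + Real.log ((M*M : ℕ) : ℝ) := by
    have hmap : ∀ q ∈ P, q.1 * q.2 ∈ Finset.Icc 1 (M*M) := by
      intro q hq
      obtain ⟨h1, h2, h3, h4⟩ := pairFacts q hq
      rw [Finset.mem_Icc]
      exact ⟨Nat.one_le_iff_ne_zero.mpr (Nat.mul_ne_zero (by omega) (by omega)),
        Nat.mul_le_mul h2 h4⟩
    rw [← Finset.sum_fiberwise_of_maps_to hmap]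
    calc ∑ n ∈ Finset.Icc 1 (M*M), ∑ q ∈ P.filter (fun q => q.1 * q.2 = n), v q
        ≤ ∑ n ∈ Finset.Icc 1 (M*M), ((n:ℝ))⁻¹ := ?_
      _ ≤ 1 + Real.log ((M*M : ℕ) : ℝ) := harmonic_sum_le (M*M)
    apply Finset.sum_le_sum
    intro n hn
    rw [Finset.mem_Icc] at hn
    have hn0 : n ≠ 0 := by omega
    set F := P.filter (fun q => q.1 * q.2 = n) with hF
    have fib_eq : ∑ q ∈ F, v q
        = ((F.filter (fun q => Nat.Coprime q.1 q.2)).card : ℝ) * f n := by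
      have step1 : ∑ q ∈ F, v q = ∑ q ∈ F.filter (fun q => Nat.Coprime q.1 q.2), f n := by
        conv_rhs => rw [Finset.sum_filter]
        apply Finset.sum_congr rfl
        intro q hq
        rw [hF, Finset.mem_filter] at hq
        rw [hv]
        dsimp only
        rw [hq.2]
      rw [step1, Finset.sum_const, nsmul_eq_mul]
    have hsub : F.filter (fun q => Nat.Coprime q.1 q.2) ⊆
        (n.divisorsAntidiagonal).filter (fun p => Nat.Coprime p.1 p.2) := by
      intro q hq
      rw [hF, Finset.mem_filter, Finset.mem_filter] at hq
      rw [Finset.mem_filter, Nat.mem_divisorsAntidiagonal]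
      exact ⟨⟨hq.1.2, hn0⟩, hq.2⟩
    have hcard : ((F.filter (fun q => Nat.Coprime q.1 q.2)).card : ℝ) ≤ (2:ℝ) ^ (ω n) := by
      have := (Finset.card_le_card hsub).trans (count_coprime_pairs n)
      exact_mod_cast this
    have hfn : (2:ℝ) ^ (ω n) * f n = ((n:ℝ))⁻¹ := by
      rw [hf]
      dsimp only
      rw [div_eq_mul_inv, ← mul_assoc, mul_inv_cancel₀ (by positivity), one_mul]
    calc ∑ q ∈ F, v q
        = ((F.filter (fun q => Nat.Coprime q.1 q.2)).card : ℝ) * f n := fib_eq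
      _ ≤ (2:ℝ) ^ (ω n) * f n := mul_le_mul_of_nonneg_right hcard (hfnn n)
      _ = ((n:ℝ))⁻¹ := hfn
  have hprod : S ^ 2 ≤ 2 * (1 + Real.log ((M*M : ℕ) : ℝ)) := by
    calc S ^ 2 = ∑ p ∈ P, f p.1 * f p.2 := stepA
      _ ≤ ∑ p ∈ P, h (i p) := Finset.sum_le_sum stepB
      _ ≤ ∑ x ∈ T, h x := stepC
      _ = (∑ g ∈ Finset.Icc 1 M, ((g:ℝ)^2)⁻¹) * ∑ q ∈ P, v q := stepD
      _ ≤ 2 * (1 + Real.log ((M*M : ℕ) : ℝ)) := by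
          apply mul_le_mul (sum_inv_sq_le M) stepE
            (Finset.sum_nonneg fun q _ => hvnn q) (by norm_num)
  have hlog2 : Real.log ((M*M : ℕ) : ℝ) ≤ 2 * Real.log R := by
    push_cast
    rw [Real.log_mul (ne_of_gt hM0R) (ne_of_gt hM0R)]
    have := Real.log_le_log hM0R hMR
    linarith
  have hfin : S ^ 2 ≤ 6 * Real.log R := by
    calc S ^ 2 ≤ 2 * (1 + Real.log ((M*M : ℕ) : ℝ)) := hprod
      _ ≤ 2 * (1 + 2 * Real.log R) := by linarith
      _ ≤ 6 * Real.log R := by linarith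
  calc S ≤ Real.sqrt (6 * Real.log R) := by
        rw [Real.le_sqrt hSnn (by linarith)]
        exact hfin
    _ = Real.sqrt 6 * Real.sqrt (Real.log R) := Real.sqrt_mul (by norm_num) _
    _ = Real.sqrt 6 * (Real.log R) ^ ((1:ℝ)/2) := by rw [← Real.sqrt_eq_rpow]
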